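/- Let T, ω_max > 0 and let μ satisfy 0 < μ < min(1/(4·T·ω_max), T·ω_max/4). Let t ∈ ℝ and let h : [t, t+T] → ℝ be differentiable with 0 ≤ h(s) ≤ 1 and |h'(s)| ≤ 2·ω_max for all s ∈ [t, t+T], and suppose ∫_t^{t+T} h(s) ds ≥ (1 − μ)·T. Then h(s) ≥ 1 − 2·√(T·ω_max·μ) for all s ∈ [t, t+T]. -/

import Mathlib

/-- Integral of a linear "triangle" function, left-endpoint version. -/
lemma tri_integral_left (c d δ ω : ℝ) :
    ∫ s in c..d, (δ - 2 * ω * (s - c)) = δ * (d - c) - ω * (d - c) ^ 2 := by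
  have hd : ∀ s ∈ Set.uIcc c d,
      HasDerivAt (fun x => δ * x - ω * (x - c) ^ 2) (δ - 2 * ω * (s - c)) s := by
    intro s _
    have h1 : HasDerivAt (fun x : ℝ => δ * x) δ s := by
      simpa using (hasDerivAt_id s).const_mul δ
    have h2 : HasDerivAt (fun x : ℝ => ω * (x - c) ^ 2) (2 * ω * (s - c)) s := by
      have : HasDerivAt (fun x : ℝ => (x - c) ^ 2) (2 * (s - c)) s := by
        exact (((hasDerivAt_id s).sub_const c).pow 2).congr_deriv (by simp)
      exact (this.const_mul ω).congr_deriv (by ring)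
    exact h1.sub h2
  have hint : IntervalIntegrable (fun s => δ - 2 * ω * (s - c)) MeasureTheory.volume c d :=
    (Continuous.continuousOn (by fun_prop)).intervalIntegrable
  rw [intervalIntegral.integral_eq_sub_of_hasDerivAt hd hint]
  ring

/-- Integral of a linear "triangle" function, right-endpoint version. -/
lemma tri_integral_right (c d δ ω : ℝ) :
    ∫ s in c..d, (δ - 2 * ω * (d - s)) = δ * (d - c) - ω * (d - c) ^ 2 := by
  have hd : ∀ s ∈ Set.uIcc c d,
      HasDerivAt (fun x => δ * x + ω * (d - x) ^ 2) (δ - 2 * ω * (d - s)) s := by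
    intro s _
    have h1 : HasDerivAt (fun x : ℝ => δ * x) δ s := by
      simpa using (hasDerivAt_id s).const_mul δ
    have h2 : HasDerivAt (fun x : ℝ => ω * (d - x) ^ 2) (-(2 * ω * (d - s))) s := by
      have : HasDerivAt (fun x : ℝ => (d - x) ^ 2) (2 * (d - s) * (-1)) s := by
        exact (((hasDerivAt_const s d).sub (hasDerivAt_id s)).pow 2).congr_deriv (by simp)
      exact (this.const_mul ω).congr_deriv (by ring)
    exact (h1.add h2).congr_deriv (by ring)
  have hint : IntervalIntegrable (fun s => δ - 2 * ω * (d - s)) MeasureTheory.volume c d :=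
    (Continuous.continuousOn (by fun_prop)).intervalIntegrable
  rw [intervalIntegral.integral_eq_sub_of_hasDerivAt hd hint]
  ring

/-- a scalar function with values in `[0,1]`, derivative bounded by
`2ω_max`, and average at least `1 − μ` over `[t, t+T]`, stays above
`1 − 2√(Tω_max μ)` on the whole interval. -/
theorem scalar_lower_bound
    (T ωmax μ t : ℝ) (hT : 0 < T) (hωmax : 0 < ωmax)
    (hμ0 : 0 < μ) (hμ1 : μ < min (1 / (4 * T * ωmax)) (T * ωmax / 4))
    (h h' : ℝ → ℝ)
    (hderiv : ∀ s ∈ Set.Icc t (t + T), HasDerivAt h (h' s) s)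
    (hrange : ∀ s ∈ Set.Icc t (t + T), 0 ≤ h s ∧ h s ≤ 1)
    (hbd : ∀ s ∈ Set.Icc t (t + T), |h' s| ≤ 2 * ωmax)
    (hint : (1 - μ) * T ≤ ∫ s in t..(t + T), h s) :
    ∀ s ∈ Set.Icc t (t + T), 1 - 2 * Real.sqrt (T * ωmax * μ) ≤ h s := by
  by_contra hcon
  push_neg at hcon
  obtain ⟨s₀, hs₀, hlt⟩ := hcon
  set ε := Real.sqrt (T * ωmax * μ) with hεdef
  have hTωμ : 0 < T * ωmax * μ := by positivity
  have hε : 0 < ε := Real.sqrt_pos.mpr hTωμ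
  have hε2 : ε ^ 2 = T * ωmax * μ := Real.sq_sqrt hTωμ.le
  have hμB : μ < T * ωmax / 4 := lt_of_lt_of_le hμ1 (min_le_right _ _)
  -- r : half-width of the dent
  set r := ε / ωmax with hrdef
  have hr : 0 < r := by positivity
  have hrT : r ≤ T / 2 := by
    have hr2 : r ^ 2 < (T / 2) ^ 2 := by
      have : r ^ 2 = T * μ / ωmax := by
        rw [hrdef, div_pow, hε2]
        field_simp
      rw [this]
      rw [div_lt_iff₀ hωmax]
      nlinarith
    nlinarith [sq_nonneg (r - T / 2), sq_nonneg (r + T / 2)]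
  -- continuity and Lipschitz on the interval
  have hcont : ContinuousOn h (Set.Icc t (t + T)) := fun s hs =>
    (hderiv s hs).continuousAt.continuousWithinAt
  have hlip : ∀ a ∈ Set.Icc t (t + T), ∀ b ∈ Set.Icc t (t + T),
      h b - h a ≤ 2 * ωmax * |b - a| := by
    intro a ha b hb
    have := (convex_Icc t (t + T)).norm_image_sub_le_of_norm_hasDerivWithin_le
      (fun x hx => (hderiv x hx).hasDerivWithinAt)
      (fun x hx => by simpa [Real.norm_eq_abs] using hbd x hx) ha hb
    have h2 : |h b - h a| ≤ 2 * ωmax * |b - a| := by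
      simpa [Real.norm_eq_abs] using this
    exact (le_abs_self _).trans h2
  set δ := 1 - h s₀ with hδdef
  have hδ : 2 * ε < δ := by simp [hδdef]; linarith
  -- pointwise lower bound on the dent
  have hdent : ∀ s ∈ Set.Icc t (t + T), δ - 2 * ωmax * |s - s₀| ≤ 1 - h s := by
    intro s hs
    have := hlip s₀ hs₀ s hs
    simp only [hδdef]
    linarith
  have h1h_nonneg : ∀ s ∈ Set.Icc t (t + T), 0 ≤ 1 - h s := fun s hs => by
    linarith [(hrange s hs).2]
  -- integrability helpers
  have hcont1h : ContinuousOn (fun s => 1 - h s) (Set.Icc t (t + T)) :=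
    continuousOn_const.sub hcont
  have hintble : ∀ a b : ℝ, t ≤ a → a ≤ b → b ≤ t + T →
      IntervalIntegrable (fun s => 1 - h s) MeasureTheory.volume a b := by
    intro a b ha hab hb
    apply ContinuousOn.intervalIntegrable
    apply hcont1h.mono
    rw [Set.uIcc_of_le hab]
    exact Set.Icc_subset_Icc ha hb
  obtain ⟨hts₀, hs₀tT⟩ := hs₀
  -- Key claim: the integral of 1 - h over [t, t+T] exceeds μ * T
  have hkey : μ * T < ∫ s in t..(t + T), (1 - h s) := by
    -- choose the side of s₀ that fits an interval of length r
    obtain ⟨c, d, hc, hcd, hd, hdc, hφ⟩ :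
        ∃ c d : ℝ, t ≤ c ∧ c ≤ d ∧ d ≤ t + T ∧ d - c = r ∧
          δ * (d - c) - ωmax * (d - c) ^ 2 ≤ ∫ s in c..d, (1 - h s) := by
      rcases le_or_gt s₀ (t + T / 2) with hside | hside
      · refine ⟨s₀, s₀ + r, hts₀, by linarith, by linarith, by ring, ?_⟩
        rw [← tri_integral_left s₀ (s₀ + r) δ ωmax]
        apply intervalIntegral.integral_mono_on (by linarith)
        · exact (Continuous.continuousOn (by fun_prop)).intervalIntegrable
        · exact hintble _ _ hts₀ (by linarith) (by linarith)
        · intro s hs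
          have hsmem : s ∈ Set.Icc t (t + T) :=
            ⟨by linarith [hs.1], by linarith [hs.2]⟩
          have habs : |s - s₀| = s - s₀ := abs_of_nonneg (by linarith [hs.1])
          have := hdent s hsmem
          rw [habs] at this
          linarith
      · refine ⟨s₀ - r, s₀, by linarith, by linarith, hs₀tT, by ring, ?_⟩
        rw [← tri_integral_right (s₀ - r) s₀ δ ωmax]
        apply intervalIntegral.integral_mono_on (by linarith)
        · exact (Continuous.continuousOn (by fun_prop)).intervalIntegrable
        · exact hintble _ _ (by linarith) (by linarith) hs₀tT
        · intro s hs
          have hsmem : s ∈ Set.Icc t (t + T) :=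
            ⟨by linarith [hs.1], by linarith [hs.2]⟩
          have habs : |s - s₀| = s₀ - s := by rw [abs_of_nonpos (by linarith [hs.2] : s - s₀ ≤ 0)]; ring
          have := hdent s hsmem
          rw [habs] at this
          linarith
    -- split the integral and use nonnegativity outside [c, d]
    have hI1 : IntervalIntegrable (fun s => 1 - h s) MeasureTheory.volume t c :=
      hintble _ _ le_rfl hc (by linarith)
    have hI2 : IntervalIntegrable (fun s => 1 - h s) MeasureTheory.volume c d :=
      hintble _ _ hc hcd hd
    have hI3 : IntervalIntegrable (fun s => 1 - h s) MeasureTheory.volume d (t + T) :=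
      hintble _ _ (by linarith) hd le_rfl
    have hsplit : (∫ s in t..c, (1 - h s)) + (∫ s in c..d, (1 - h s))
        + (∫ s in d..(t + T), (1 - h s)) = ∫ s in t..(t + T), (1 - h s) := by
      rw [intervalIntegral.integral_add_adjacent_intervals hI1 hI2,
        intervalIntegral.integral_add_adjacent_intervals (hI1.trans hI2) hI3]
    have hn1 : 0 ≤ ∫ s in t..c, (1 - h s) :=
      intervalIntegral.integral_nonneg hc
        (fun u hu => h1h_nonneg u ⟨hu.1, by linarith [hu.2]⟩)
    have hn3 : 0 ≤ ∫ s in d..(t + T), (1 - h s) :=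
      intervalIntegral.integral_nonneg hd
        (fun u hu => h1h_nonneg u ⟨by linarith [hu.1], hu.2⟩)
    -- The triangular bound exceeds μT
    have htri : μ * T < δ * (d - c) - ωmax * (d - c) ^ 2 := by
      rw [hdc, hrdef]
      have hεω : ε / ωmax * ωmax = ε := div_mul_cancel₀ ε (ne_of_gt hωmax)
      have h2 : 2 * ε * (ε / ωmax) - ωmax * (ε / ωmax) ^ 2 = ε ^ 2 / ωmax := by
        field_simp; ring
      have h3 : ε ^ 2 / ωmax = μ * T := by
        rw [hε2]; field_simp
      nlinarith [hr]
    linarith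
  -- conclude
  have hTint : (∫ s in t..(t + T), (1 : ℝ)) = T := by simp
  have hhint : IntervalIntegrable h MeasureTheory.volume t (t + T) := by
    apply ContinuousOn.intervalIntegrable
    rwa [Set.uIcc_of_le (by linarith : t ≤ t + T)]
  have hsub : (∫ s in t..(t + T), (1 - h s)) = T - ∫ s in t..(t + T), h s := by
    rw [intervalIntegral.integral_sub (intervalIntegrable_const) hhint, hTint]
  rw [hsub] at hkey
  nlinarith
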